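/- Let m_n ⇀ m_∞ be weakly converging Borel probability measures on a complete separable metric space Y. Then for every C > 0, the union over n of the entropy sublevel sets {μ ∈ P(Y) : Ent_{m_n}(μ) ≤ C} is a tight family of probability measures. -/

import Mathlib

open Filter Topology MeasureTheory Set Metric
open scoped ENNReal NNReal

open Classical in
/-- The Boltzmann–Shannon relative entropy `Ent_m(μ) = ∫ ρ log ρ dm` if `μ = ρ m ≪ m`,
and `+∞` otherwise. -/
noncomputable def relEntropy {X : Type*} [MeasurableSpace X] (m μ : Measure X) : EReal :=
  if μ ≪ m then
    ((∫⁻ x, ENNReal.ofReal ((μ.rnDeriv m x).toReal * Real.log (μ.rnDeriv m x).toReal) ∂m :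
        ℝ≥0∞) : EReal)
      - ((∫⁻ x, ENNReal.ofReal (-((μ.rnDeriv m x).toReal * Real.log (μ.rnDeriv m x).toReal)) ∂m :
        ℝ≥0∞) : EReal)
  else ⊤

lemma aux_log_le (y : ℝ) (hy : 0 < y) : Real.log y ≤ y * Real.exp (-1) := by
  have h := Real.log_le_sub_one_of_pos (x := y * Real.exp (-1)) (by positivity)
  rw [Real.log_mul (ne_of_gt hy) (Real.exp_ne_zero _), Real.log_exp] at h
  linarith

lemma aux_neg_mul_log_le (x : ℝ) (hx : 0 ≤ x) : -(x * Real.log x) ≤ Real.exp (-1) := by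
  rcases eq_or_lt_of_le hx with h | h
  · simp [← h]
    positivity
  · have h1 := aux_log_le x⁻¹ (by positivity)
    rw [Real.log_inv] at h1
    have h2 := mul_le_mul_of_nonneg_left h1 h.le
    have hxi : x * x⁻¹ = 1 := mul_inv_cancel₀ h.ne'
    nlinarith [Real.exp_pos (-1)]

lemma aux_young (t x : ℝ) (hx : 0 ≤ x) : t * x ≤ x * Real.log x + Real.exp t := by
  rcases eq_or_lt_of_le hx with h | h
  · simp [← h]
    positivity
  · have h1 : Real.log (Real.exp t / x) ≤ Real.exp t / x - 1 :=
      Real.log_le_sub_one_of_pos (by positivity)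
    rw [Real.log_div (Real.exp_ne_zero t) h.ne', Real.log_exp] at h1
    have h2 := mul_le_mul_of_nonneg_left h1 h.le
    have hxi : x * (Real.exp t / x) = Real.exp t := by field_simp
    nlinarith

/-- From `(P : EReal) - N ≤ C` and `N ≤ ofReal r` we get `P ≤ ofReal (C + r)`. -/
lemma ereal_sandwich {P N : ℝ≥0∞} {C r : ℝ} (hr : 0 ≤ r)
    (h : (P : EReal) - (N : EReal) ≤ (C : EReal)) (hN : N ≤ ENNReal.ofReal r) :
    P ≤ ENNReal.ofReal (C + r) := by
  have hNtop : N ≠ ⊤ := (hN.trans_lt ENNReal.ofReal_lt_top).ne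
  have hNtop' : (N : EReal) ≠ ⊤ := by simpa [EReal.coe_ennreal_eq_top_iff] using hNtop
  have h1 : (P : EReal) ≤ (C : EReal) + (N : EReal) :=
    (EReal.sub_le_iff_le_add (Or.inl (EReal.coe_ennreal_ne_bot N))
      (Or.inl hNtop')).mp h
  have hNr : ((N.toReal : ℝ) : EReal) = (N : EReal) := by
    rw [← EReal.toReal_coe_ennreal (x := N)]
    exact EReal.coe_toReal hNtop' (EReal.coe_ennreal_ne_bot N)
  rw [← hNr, ← EReal.coe_add] at h1
  have hPtop : P ≠ ⊤ := by
    intro hPt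
    rw [hPt] at h1
    simp only [EReal.coe_ennreal_top, top_le_iff] at h1
    exact EReal.coe_ne_top _ h1
  have h2 : P.toReal ≤ C + N.toReal := by
    have h3 := EReal.toReal_le_toReal h1 (EReal.coe_ennreal_ne_bot P) (EReal.coe_ne_top _)
    rw [EReal.toReal_coe_ennreal, EReal.toReal_coe] at h3
    exact h3
  have h3 : N.toReal ≤ r := by
    have := ENNReal.toReal_mono ENNReal.ofReal_ne_top hN
    simpa [ENNReal.toReal_ofReal hr] using this
  rw [← ENNReal.ofReal_toReal hPtop]
  exact ENNReal.ofReal_le_ofReal (by linarith)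

/-- Fundamental entropy estimate: if `Ent_m(μ) ≤ C` then for any measurable `E` and `t > 0`,
`μ E ≤ (C + e⁻¹ + eᵗ m E) / t`. -/
lemma meas_le_of_relEntropy_le {Y : Type*} [MeasurableSpace Y] {m μ : Measure Y}
    [IsProbabilityMeasure m] [IsProbabilityMeasure μ] {C : ℝ} (hC : 0 < C)
    (h : relEntropy m μ ≤ (C : EReal)) {E : Set Y} (hE : MeasurableSet E)
    {t : ℝ} (ht : 0 < t) :
    μ E ≤ (ENNReal.ofReal (C + Real.exp (-1)) + ENNReal.ofReal (Real.exp t) * m E) /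
      ENNReal.ofReal t := by
  classical
  by_cases hac : μ ≪ m
  swap
  · rw [relEntropy, if_neg hac, top_le_iff] at h
    exact absurd h (EReal.coe_ne_top C)
  rw [relEntropy, if_pos hac] at h
  have hNle : (∫⁻ x, ENNReal.ofReal
      (-((μ.rnDeriv m x).toReal * Real.log (μ.rnDeriv m x).toReal)) ∂m)
      ≤ ENNReal.ofReal (Real.exp (-1)) := by
    calc (∫⁻ x, ENNReal.ofReal
          (-((μ.rnDeriv m x).toReal * Real.log (μ.rnDeriv m x).toReal)) ∂m)
        ≤ ∫⁻ _, ENNReal.ofReal (Real.exp (-1)) ∂m :=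
          lintegral_mono fun x =>
            ENNReal.ofReal_le_ofReal (aux_neg_mul_log_le _ ENNReal.toReal_nonneg)
      _ = ENNReal.ofReal (Real.exp (-1)) := by simp
  have hPle : (∫⁻ x, ENNReal.ofReal
      ((μ.rnDeriv m x).toReal * Real.log (μ.rnDeriv m x).toReal) ∂m)
      ≤ ENNReal.ofReal (C + Real.exp (-1)) :=
    ereal_sandwich (Real.exp_pos _).le h hNle
  have hset : ∫⁻ x in E, μ.rnDeriv m x ∂m = μ E := Measure.setLIntegral_rnDeriv hac E
  have key : ENNReal.ofReal t * μ E ≤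
      ENNReal.ofReal (C + Real.exp (-1)) + ENNReal.ofReal (Real.exp t) * m E := by
    rw [← hset, ← lintegral_const_mul' _ _ ENNReal.ofReal_ne_top]
    have hae : ∀ᵐ x ∂(m.restrict E), ENNReal.ofReal t * μ.rnDeriv m x ≤
        ENNReal.ofReal ((μ.rnDeriv m x).toReal * Real.log (μ.rnDeriv m x).toReal) +
          ENNReal.ofReal (Real.exp t) := by
      filter_upwards [ae_restrict_of_ae (Measure.rnDeriv_lt_top μ m)] with x hx
      have heq : ENNReal.ofReal t * μ.rnDeriv m x =
          ENNReal.ofReal (t * (μ.rnDeriv m x).toReal) := by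
        rw [ENNReal.ofReal_mul ht.le, ENNReal.ofReal_toReal hx.ne]
      rw [heq]
      calc ENNReal.ofReal (t * (μ.rnDeriv m x).toReal)
          ≤ ENNReal.ofReal ((μ.rnDeriv m x).toReal * Real.log (μ.rnDeriv m x).toReal +
              Real.exp t) := ENNReal.ofReal_le_ofReal (aux_young _ _ ENNReal.toReal_nonneg)
        _ ≤ _ := ENNReal.ofReal_add_le
    calc ∫⁻ x in E, ENNReal.ofReal t * μ.rnDeriv m x ∂m
        ≤ ∫⁻ x in E, (ENNReal.ofReal ((μ.rnDeriv m x).toReal *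
            Real.log (μ.rnDeriv m x).toReal) + ENNReal.ofReal (Real.exp t)) ∂m :=
          lintegral_mono_ae hae
      _ = (∫⁻ x in E, ENNReal.ofReal ((μ.rnDeriv m x).toReal *
            Real.log (μ.rnDeriv m x).toReal) ∂m) + ENNReal.ofReal (Real.exp t) * m E := by
          rw [lintegral_add_right _ measurable_const, setLIntegral_const]
      _ ≤ _ := by
          gcongr
          exact (setLIntegral_le_lintegral _ _).trans hPle
  rw [ENNReal.le_div_iff_mul_le (Or.inl (by simp [ht])) (Or.inl ENNReal.ofReal_ne_top), mul_comm]
  exact key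

/-- A weakly converging sequence of probability measures on a Polish space is tight. -/
lemma tight_of_weak_conv {Y : Type*} [MetricSpace Y] [CompleteSpace Y]
    [TopologicalSpace.SeparableSpace Y] [MeasurableSpace Y] [BorelSpace Y]
    (m : ℕ → Measure Y) (minf : Measure Y)
    (hm : ∀ n, IsProbabilityMeasure (m n)) (hminf : IsProbabilityMeasure minf)
    (hconv : ∀ φ : BoundedContinuousFunction Y ℝ,
      Tendsto (fun n => ∫ x, φ x ∂(m n)) atTop (𝓝 (∫ x, φ x ∂minf)))
    (δ : ℝ) (hδ : 0 < δ) :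
    ∃ K : Set Y, IsCompact K ∧ ∀ n, m n Kᶜ ≤ ENNReal.ofReal δ := by
  classical
  cases isEmpty_or_nonempty Y with
  | inl hY =>
    refine ⟨∅, isCompact_empty, fun n => ?_⟩
    rw [Set.eq_empty_of_isEmpty ((∅ : Set Y)ᶜ)]
    simp
  | inr hY =>
  obtain ⟨y, hy⟩ := TopologicalSpace.exists_dense_seq Y
  set P : ℕ → ProbabilityMeasure Y := fun n => ⟨m n, hm n⟩ with hPdef
  set Pinf : ProbabilityMeasure Y := ⟨minf, hminf⟩ with hPinfdef
  have hPconv : Tendsto P atTop (𝓝 Pinf) :=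
    ProbabilityMeasure.tendsto_iff_forall_integral_tendsto.mpr hconv
  set r : ℕ → ℝ := fun k => 1 / (2 * (k + 1)) with hrdef
  have hr : ∀ k, 0 < r k := fun k => by positivity
  set B : ℕ → ℕ → Set Y := fun j k => ⋃ i ∈ Finset.range j, ball (y i) (r k) with hBdef
  have hBopen : ∀ j k, IsOpen (B j k) := fun j k => isOpen_biUnion fun _ _ => isOpen_ball
  have hBmono : ∀ k, Monotone fun j => B j k := by
    intro k j j' hj z hz
    simp only [hBdef, Set.mem_iUnion, Finset.mem_range, exists_prop] at hz ⊢
    obtain ⟨i, hi, hzi⟩ := hz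
    exact ⟨i, lt_of_lt_of_le hi hj, hzi⟩
  have hBunion : ∀ k, (⋃ j, B j k) = univ := by
    intro k
    ext z
    simp only [Set.mem_iUnion, Set.mem_univ, iff_true, hBdef, Finset.mem_range, mem_ball]
    obtain ⟨i, hi⟩ := hy.exists_dist_lt z (hr k)
    exact ⟨i + 1, i, Nat.lt_succ_self i, hi⟩
  have hcompl_tendsto : ∀ (ν : Measure Y), IsProbabilityMeasure ν → ∀ k,
      Tendsto (fun j => ν (B j k)ᶜ) atTop (𝓝 0) := by
    intro ν hν k
    have h1 : Tendsto (ν ∘ fun j => (B j k)ᶜ) atTop (𝓝 (ν (⋂ j, (B j k)ᶜ))) := by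
      apply tendsto_measure_iInter_atTop
      · exact fun j => (hBopen j k).measurableSet.compl.nullMeasurableSet
      · exact fun j j' hj => Set.compl_subset_compl.mpr (hBmono k hj)
      · exact ⟨0, measure_ne_top ν _⟩
    have h2 : (⋂ j, (B j k)ᶜ) = (∅ : Set Y) := by
      rw [← Set.compl_iUnion, hBunion k, Set.compl_univ]
    rw [h2, measure_empty] at h1
    exact h1
  have main : ∀ k : ℕ, ∃ J : ℕ, ∀ n,
      m n (B J k)ᶜ ≤ ENNReal.ofReal δ * (2⁻¹ : ℝ≥0∞) ^ (k + 1) := by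
    intro k
    set η := ENNReal.ofReal δ * (2⁻¹ : ℝ≥0∞) ^ (k + 1) with hηdef
    have hη : 0 < η := by
      apply ENNReal.mul_pos
      · simp [ENNReal.ofReal_eq_zero, not_le, hδ]
      · exact (pow_ne_zero _ (by simp))
    obtain ⟨j₀, hj₀⟩ : ∃ j, minf (B j k)ᶜ < η :=
      ((hcompl_tendsto minf hminf k).eventually_lt_const hη).exists
    have hlimsup : limsup (fun n => m n (B j₀ k)ᶜ) atTop < η :=
      lt_of_le_of_lt (ProbabilityMeasure.limsup_measure_closed_le_of_tendsto hPconv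
        (isClosed_compl_iff.mpr (hBopen j₀ k))) hj₀
    obtain ⟨N, hN⟩ := (eventually_lt_of_limsup_lt hlimsup).exists_forall_of_atTop
    have hsmall : ∀ n, ∃ j, m n (B j k)ᶜ < η := fun n =>
      ((hcompl_tendsto (m n) (hm n) k).eventually_lt_const hη).exists
    choose g hg using hsmall
    refine ⟨max j₀ ((Finset.range N).sup g), fun n => ?_⟩
    rcases lt_or_ge n N with hn | hn
    · exact le_trans (measure_mono (Set.compl_subset_compl.mpr (hBmono k
        (le_max_of_le_right (Finset.le_sup (Finset.mem_range.mpr hn)))))) (hg n).le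
    · exact le_trans (measure_mono (Set.compl_subset_compl.mpr (hBmono k
        (le_max_left _ _)))) (hN n hn).le
  choose J hJ using main
  set S : ℕ → Set Y := fun k => ⋃ i ∈ Finset.range (J k), closedBall (y i) (r k) with hSdef
  have hSclosed : ∀ k, IsClosed (S k) :=
    fun k => isClosed_biUnion_finset fun i _ => isClosed_closedBall
  have hBS : ∀ k, B (J k) k ⊆ S k := fun k =>
    Set.iUnion₂_mono fun i _ => ball_subset_closedBall
  refine ⟨⋂ k, S k, ?_, fun n => ?_⟩
  · apply TotallyBounded.isCompact_of_isClosed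
    · rw [Metric.totallyBounded_iff]
      intro ε hε
      obtain ⟨k, hk⟩ : ∃ k : ℕ, r k < ε := by
        obtain ⟨k, hk⟩ := exists_nat_one_div_lt hε
        refine ⟨k, lt_of_le_of_lt ?_ hk⟩
        rw [hrdef]
        apply one_div_le_one_div_of_le (by positivity)
        push_cast
        linarith
      refine ⟨↑((Finset.range (J k)).image y), Finset.finite_toSet _, ?_⟩
      intro z hz
      have hz' : z ∈ S k := Set.mem_iInter.mp hz k
      rw [hSdef] at hz'
      simp only [Set.mem_iUnion, exists_prop] at hz'
      obtain ⟨i, hi, hzi⟩ := hz'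
      simp only [Set.mem_iUnion, exists_prop, mem_ball, Finset.coe_image, Set.mem_image,
        Finset.mem_coe]
      exact ⟨y i, ⟨i, hi, rfl⟩, lt_of_le_of_lt (mem_closedBall.mp hzi) hk⟩
    · exact isClosed_iInter hSclosed
  · rw [Set.compl_iInter]
    calc m n (⋃ k, (S k)ᶜ) ≤ ∑' k, m n (S k)ᶜ := measure_iUnion_le _
      _ ≤ ∑' k, ENNReal.ofReal δ * (2⁻¹ : ℝ≥0∞) ^ (k + 1) :=
        ENNReal.tsum_le_tsum fun k => le_trans
          (measure_mono (Set.compl_subset_compl.mpr (hBS k))) (hJ k n)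
      _ = ENNReal.ofReal δ := by
        rw [ENNReal.tsum_mul_left]
        have : ∑' k : ℕ, (2⁻¹ : ℝ≥0∞) ^ (k + 1) = 1 := by
          have h1 : ∀ k : ℕ, (2⁻¹ : ℝ≥0∞) ^ (k + 1) = 2⁻¹ * (2⁻¹ : ℝ≥0∞) ^ k := by
            intro k; rw [pow_succ, mul_comm]
          simp_rw [h1]
          rw [ENNReal.tsum_mul_left, ENNReal.tsum_geometric]
          rw [ENNReal.one_sub_inv_two, inv_inv]
          exact ENNReal.inv_mul_cancel two_ne_zero ENNReal.ofNat_ne_top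
        rw [this, mul_one]

/-- Tightness of entropy sublevel sets along a weakly converging sequence of reference
probability measures: if `m_n ⇀ m_∞` on a complete separable metric space, then for every
`C > 0` the union over `n` of the sublevel sets `{μ : Ent_{m_n}(μ) ≤ C}` is tight. -/
theorem tight_of_relEntropy_le {Y : Type*} [MetricSpace Y] [CompleteSpace Y]
    [TopologicalSpace.SeparableSpace Y] [MeasurableSpace Y] [BorelSpace Y]
    (m : ℕ → Measure Y) (minf : Measure Y)
    (hm : ∀ n, IsProbabilityMeasure (m n)) (hminf : IsProbabilityMeasure minf)
    (hconv : ∀ φ : BoundedContinuousFunction Y ℝ,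
      Tendsto (fun n => ∫ x, φ x ∂(m n)) atTop (𝓝 (∫ x, φ x ∂minf)))
    (C : ℝ) (hC : 0 < C) :
    ∀ ε : ℝ, 0 < ε → ∃ K : Set Y, IsCompact K ∧
      ∀ (n : ℕ) (μ : Measure Y), IsProbabilityMeasure μ → relEntropy (m n) μ ≤ (C : EReal) →
        μ Kᶜ ≤ ENNReal.ofReal ε := by
  intro ε hε
  set D := C + Real.exp (-1) with hD
  have hD0 : 0 < D := by positivity
  set t := 2 * D / ε with htdef
  have ht : 0 < t := by positivity
  set δ := ε * t / (2 * Real.exp t) with hδdef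
  have hδ : 0 < δ := by positivity
  obtain ⟨K, hK, hKm⟩ := tight_of_weak_conv m minf hm hminf hconv δ hδ
  refine ⟨K, hK, fun n μ hμ hent => ?_⟩
  haveI := hm n
  haveI := hμ
  have h1 := meas_le_of_relEntropy_le (m := m n) (μ := μ) hC hent
    hK.isClosed.measurableSet.compl ht
  refine h1.trans ?_
  have e1 : Real.exp t * δ = ε * t / 2 := by
    rw [hδdef]
    field_simp
  have e2 : D = t * ε / 2 := by
    rw [htdef]
    field_simp
  calc (ENNReal.ofReal D + ENNReal.ofReal (Real.exp t) * m n Kᶜ) / ENNReal.ofReal t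
      ≤ (ENNReal.ofReal D + ENNReal.ofReal (Real.exp t) * ENNReal.ofReal δ) /
        ENNReal.ofReal t := by gcongr; exact hKm n
    _ = ENNReal.ofReal (D + Real.exp t * δ) / ENNReal.ofReal t := by
        rw [← ENNReal.ofReal_mul (Real.exp_pos t).le,
          ← ENNReal.ofReal_add hD0.le (by positivity)]
    _ = ENNReal.ofReal ((D + Real.exp t * δ) / t) := (ENNReal.ofReal_div_of_pos ht).symm
    _ ≤ ENNReal.ofReal ε := by
        apply ENNReal.ofReal_le_ofReal
        rw [e1, e2]
        rw [div_le_iff₀ ht]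
        ring_nf
        nlinarith
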